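/- Let d ≥ 1, let u be a symmetric real d×d matrix, and suppose that I_d + 2su is invertible for every s ∈ [0,T]. Then the function ψ(s) := (I_d + 2su)⁻¹·u satisfies ψ(0) = u and, for every s ∈ [0,T], ψ is differentiable at s with ψ′(s) = −2·ψ(s)·ψ(s). -/

import Mathlib

open Matrix

attribute [local instance] Matrix.linftyOpNormedRing Matrix.linftyOpNormedAlgebra

theorem stmt_12 (d : ℕ) (hd : 1 ≤ d) (T : ℝ) (hT : 0 < T)
    (u : Matrix (Fin d) (Fin d) ℝ) (hu : u.IsSymm)
    (hinv : ∀ s ∈ Set.Icc (0:ℝ) T, IsUnit ((1 : Matrix (Fin d) (Fin d) ℝ) + (2 * s) • u))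
    (ψ : ℝ → Matrix (Fin d) (Fin d) ℝ)
    (hψ : ∀ s, ψ s = ((1 : Matrix (Fin d) (Fin d) ℝ) + (2 * s) • u)⁻¹ * u) :
    ψ 0 = u ∧ ∀ s ∈ Set.Icc (0:ℝ) T,
      HasDerivAt ψ (-(2:ℝ) • (ψ s * ψ s)) s := by
  constructor
  · rw [hψ]; simp
  intro s hs
  set A : ℝ → Matrix (Fin d) (Fin d) ℝ :=
    fun t => (1 : Matrix (Fin d) (Fin d) ℝ) + (2 * t) • u with hA
  obtain ⟨w, hw⟩ := hinv s hs
  have hψeq : ψ = fun t => Ring.inverse (A t) * u := by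
    funext t
    rw [hψ, Matrix.nonsing_inv_eq_ringInverse]
  have hA' : HasDerivAt A ((2:ℝ) • u) s := by
    have h1 : HasDerivAt (fun t : ℝ => (2 * t) • u) ((2:ℝ) • u) s := by
      have := ((hasDerivAt_id s).const_mul (2:ℝ)).smul_const u
      simp only [mul_one, smul_smul, one_smul] at this
      exact this
    exact h1.const_add (1 : Matrix (Fin d) (Fin d) ℝ)
  have hfd : HasFDerivAt Ring.inverse
      (-(ContinuousLinearMap.mulLeftRight ℝ _ (↑w⁻¹) (↑w⁻¹))) (A s) := by
    have hAsw : A s = ↑w := hw.symm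
    rw [hAsw]; exact hasFDerivAt_ringInverse w
  have hinvderiv : HasDerivAt (fun t => Ring.inverse (A t))
      (-((↑w⁻¹ : Matrix (Fin d) (Fin d) ℝ) * ((2:ℝ) • u) * (↑w⁻¹ : Matrix (Fin d) (Fin d) ℝ))) s := by
    have := hfd.comp_hasDerivAt s hA'
    exact this
  have hfinal := hinvderiv.mul_const u
  rw [hψeq]
  refine hfinal.congr_deriv ?_
  symm
  have hwinv : Ring.inverse (A s) = (↑w⁻¹ : Matrix (Fin d) (Fin d) ℝ) := by
    have hAsw : A s = ↑w := hw.symm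
    rw [hAsw, Ring.inverse_unit]
  simp only [Ring.inverse_unit, hwinv]
  simp only [neg_smul, neg_mul, smul_mul_assoc, mul_smul_comm, smul_smul]
  simp [mul_assoc]
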